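/- Let C be the symmetric real 6×6 matrix C = [[0,0,0,0,0,0],[0,0,−1,−1,0,0],[0,−1,0,0,1,0],[0,−1,0,1,1,0],[0,0,1,1,1,0],[0,0,0,0,0,1]], and let Δ = { d ∈ ℝ⁶ : d_i ≥ 0 for all i and d₁+⋯+d₆ = 1 } be the standard simplex. Then the minimum of the quadratic form d ↦ dᵀCd over Δ equals −1/2, and it is attained at the unique point d = (0, 1/2, 1/2, 0, 0, 0). -/

import Mathlib

private lemma figure_eight_expandQ (d : Fin 6 → ℝ) :
    (∑ i, ∑ j, (!![0, 0, 0, 0, 0, 0;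
                 0, 0, -1, -1, 0, 0;
                 0, -1, 0, 0, 1, 0;
                 0, -1, 0, 1, 1, 0;
                 0, 0, 1, 1, 1, 0;
                 0, 0, 0, 0, 0, (1:ℝ)]) i j * d i * d j) =
    -2*(d 1)*(d 2) - 2*(d 1)*(d 3) + 2*(d 2)*(d 4) + (d 3)^2 + 2*(d 3)*(d 4) + (d 4)^2 + (d 5)^2 := by
  simp [Fin.sum_univ_succ, Matrix.cons_val_zero, Matrix.cons_val_succ,
    (by decide : (Fin.succ 2 : Fin 6) = 3), (by decide : ((Fin.succ 2).succ : Fin 6) = 4),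
    (by decide : ((Fin.succ 2).succ.succ : Fin 6) = 5)]
  ring

/-- Minimization of the quadratic form of the figure-eight knot quiver over the standard
simplex: the minimum of `dᵀCd` over `{d ≥ 0, ∑ d_i = 1}` is `−1/2`, attained exactly at
`d = (0, 1/2, 1/2, 0, 0, 0)`. -/
theorem figure_eight_quiver_simplex_min
    (C : Matrix (Fin 6) (Fin 6) ℝ)
    (hC : C = !![0, 0, 0, 0, 0, 0;
                 0, 0, -1, -1, 0, 0;
                 0, -1, 0, 0, 1, 0;
                 0, -1, 0, 1, 1, 0;
                 0, 0, 1, 1, 1, 0;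
                 0, 0, 0, 0, 0, 1])
    (d0 : Fin 6 → ℝ) (hd0 : d0 = ![0, 1/2, 1/2, 0, 0, 0]) :
    (∀ d : Fin 6 → ℝ, (∀ i, 0 ≤ d i) → (∑ i, d i) = 1 →
        -(1/2) ≤ ∑ i, ∑ j, C i j * d i * d j) ∧
    ((∀ i, 0 ≤ d0 i) ∧ (∑ i, d0 i) = 1 ∧
        (∑ i, ∑ j, C i j * d0 i * d0 j) = -(1/2)) ∧
    (∀ d : Fin 6 → ℝ, (∀ i, 0 ≤ d i) → (∑ i, d i) = 1 →
        (∑ i, ∑ j, C i j * d i * d j) = -(1/2) → d = d0) := by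
  subst hC hd0
  have hid : ∀ d : Fin 6 → ℝ, (d 0 + d 1 + d 2 + d 3 + d 4 + d 5) = 1 →
      -2*(d 1)*(d 2) - 2*(d 1)*(d 3) + 2*(d 2)*(d 4) + (d 3)^2 + 2*(d 3)*(d 4) + (d 4)^2 + (d 5)^2
      = -(1/2) + 1/2*(d 1 - d 2 - d 3)^2 + (d 3 + d 4)^2 + 2*(d 2)*(d 4) + (d 5)^2
        + 1/2*(d 0 + d 4 + d 5)*(1 + d 1 + d 2 + d 3) := by
    intro d hsum
    linear_combination (-(1/2)*(1 + d 1 + d 2 + d 3)) * hsum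
  refine ⟨?_, ⟨?_, ?_, ?_⟩, ?_⟩
  · intro d hpos hsum
    rw [figure_eight_expandQ]
    rw [Fin.sum_univ_six] at hsum
    rw [hid d hsum]
    have h1 := hpos 1; have h2 := hpos 2; have h3 := hpos 3
    have h0 := hpos 0; have h4 := hpos 4; have h5 := hpos 5
    nlinarith [sq_nonneg (d 1 - d 2 - d 3), sq_nonneg (d 3 + d 4), sq_nonneg (d 5),
      mul_nonneg h2 h4,
      mul_nonneg (add_nonneg (add_nonneg h0 h4) h5)
        (show (0:ℝ) ≤ 1 + d 1 + d 2 + d 3 by linarith)]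
  · intro i
    fin_cases i <;> norm_num
  · rw [Fin.sum_univ_six,
      show ((![0, 1/2, 1/2, 0, 0, 0] : Fin 6 → ℝ) 5) = 0 from rfl,
      show ((![0, 1/2, 1/2, 0, 0, 0] : Fin 6 → ℝ) 2) = 1/2 from rfl,
      show ((![0, 1/2, 1/2, 0, 0, 0] : Fin 6 → ℝ) 3) = 0 from rfl,
      show ((![0, 1/2, 1/2, 0, 0, 0] : Fin 6 → ℝ) 4) = 0 from rfl]
    norm_num
  · rw [figure_eight_expandQ,
      show ((![0, 1/2, 1/2, 0, 0, 0] : Fin 6 → ℝ) 5) = 0 from rfl,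
      show ((![0, 1/2, 1/2, 0, 0, 0] : Fin 6 → ℝ) 2) = 1/2 from rfl,
      show ((![0, 1/2, 1/2, 0, 0, 0] : Fin 6 → ℝ) 3) = 0 from rfl,
      show ((![0, 1/2, 1/2, 0, 0, 0] : Fin 6 → ℝ) 4) = 0 from rfl]
    norm_num
  · intro d hpos hsum heq
    rw [figure_eight_expandQ] at heq
    rw [Fin.sum_univ_six] at hsum
    rw [hid d hsum] at heq
    have h1 := hpos 1; have h2 := hpos 2; have h3 := hpos 3
    have h0 := hpos 0; have h4 := hpos 4; have h5 := hpos 5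
    have key : ∀ x : ℝ, x ^ 2 ≤ 0 → x = 0 := fun x hx =>
      pow_eq_zero_iff (n := 2) (by norm_num) |>.mp (le_antisymm hx (sq_nonneg x))
    have hp : (0:ℝ) ≤ 1 + d 1 + d 2 + d 3 := by linarith
    have hq : (0:ℝ) ≤ d 0 + d 4 + d 5 := by linarith
    have hprod := mul_nonneg hq hp
    have hcf := mul_nonneg h2 h4
    have s1 := sq_nonneg (d 1 - d 2 - d 3)
    have s2 := sq_nonneg (d 3 + d 4)
    have s3 := sq_nonneg (d 5)
    have e5 : d 5 = 0 := key _ (by linarith)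
    have e34 : (d 3 + d 4) = 0 := key _ (by linarith)
    have e3 : d 3 = 0 := by linarith
    have e4 : d 4 = 0 := by linarith
    have eprod : (d 0 + d 4 + d 5) * (1 + d 1 + d 2 + d 3) = 0 := by linarith
    have e0 : d 0 = 0 := by
      rcases mul_eq_zero.mp eprod with h | h
      · linarith
      · linarith
    have e12 : d 1 - d 2 - d 3 = 0 := key _ (by linarith)
    have e1 : d 1 = 1/2 := by linarith
    have e2 : d 2 = 1/2 := by linarith
    funext i
    fin_cases i
    · exact e0
    · exact e1
    · exact e2
    · exact e3
    · exact e4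
    · exact e5
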